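/- Let G be a connected k-regular simple graph on N vertices with averaging matrix A, and let σ₂ ≥ 0 satisfy ‖Ax‖₂ ≤ σ₂‖x‖₂ for every x ∈ ℝ^N with ∑_i x_i = 0. Then for every β ∈ ℝ^N, (1 − σ₂²)·((k+1)/N)·‖β − Π_B(β)‖² ≤ max_{1 ≤ i ≤ N} ‖β − Π_{B_i}(β)‖². In other words, the linear regularity constant η of the family B_1, …, B_N is at least (1 − σ₂²)(k+1)/N. -/

import Mathlib

noncomputable section

/-- The local consensus subspace `B_i = {β : β_i = β_k for all neighbors k of i}`. -/
def localConsensus {N : ℕ} (G : SimpleGraph (Fin N)) (i : Fin N) :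
    Submodule ℝ (EuclideanSpace ℝ (Fin N)) where
  carrier := {β | ∀ k, G.Adj i k → β i = β k}
  zero_mem' := by intro k _; rfl
  add_mem' := by
    intro a b ha hb k hk
    simp only [Set.mem_setOf_eq] at *
    simp [PiLp.add_apply, ha k hk, hb k hk]
  smul_mem' := by
    intro c a ha k hk
    simp only [Set.mem_setOf_eq] at *
    simp [PiLp.smul_apply, ha k hk]

/-- The averaging matrix of a `k`-regular graph: `A i j = 1/(k+1)` if `j = i` or `j ∈ 𝒩 i`. -/
def avgMatrix {N : ℕ} (G : SimpleGraph (Fin N)) [DecidableRel G.Adj] (k : ℕ) :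
    Matrix (Fin N) (Fin N) ℝ :=
  Matrix.of fun i j => if j = i ∨ G.Adj i j then (1 : ℝ) / (k + 1) else 0

namespace LRBaux

open Finset

lemma norm_sq_eq_sum {N : ℕ} (y : EuclideanSpace ℝ (Fin N)) : ‖y‖ ^ 2 = ∑ i, (y i) ^ 2 := by
  rw [EuclideanSpace.norm_eq, Real.sq_sqrt (by positivity)]
  simp [sq_abs]

/-- the variance-minimizing property of the mean -/
lemma variance_min {α : Type*} (s : Finset α) (f : α → ℝ) (a c : ℝ)
    (h : ∑ j ∈ s, f j = s.card * a) :
    ∑ j ∈ s, (f j - a) ^ 2 ≤ ∑ j ∈ s, (f j - c) ^ 2 := by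
  have key : ∑ j ∈ s, (f j - c) ^ 2 - ∑ j ∈ s, (f j - a) ^ 2 = s.card * (a - c) ^ 2 := by
    rw [← Finset.sum_sub_distrib]
    have h1 : ∀ j ∈ s, (f j - c) ^ 2 - (f j - a) ^ 2
        = (a - c) * 2 * f j - (a - c) * (a + c) := by intro j _; ring
    rw [Finset.sum_congr rfl h1, Finset.sum_sub_distrib, ← Finset.mul_sum, h,
      Finset.sum_const, nsmul_eq_mul]
    ring
  nlinarith [mul_nonneg (Nat.cast_nonneg (α := ℝ) s.card) (sq_nonneg (a - c))]

variable {N k : ℕ} (G : SimpleGraph (Fin N)) [DecidableRel G.Adj]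

lemma mem_closed_nbhd_comm (i j : Fin N) :
    j ∈ insert i (G.neighborFinset i) ↔ i ∈ insert j (G.neighborFinset j) := by
  simp only [Finset.mem_insert, SimpleGraph.mem_neighborFinset]
  constructor
  · rintro (rfl | h)
    · exact Or.inl rfl
    · exact Or.inr h.symm
  · rintro (rfl | h)
    · exact Or.inl rfl
    · exact Or.inr h.symm

lemma card_closed_nbhd (hreg : G.IsRegularOfDegree k) (i : Fin N) :
    (insert i (G.neighborFinset i)).card = k + 1 := by
  rw [Finset.card_insert_of_notMem (by simp),
    show (G.neighborFinset i).card = k from hreg i]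

lemma double_count (hreg : G.IsRegularOfDegree k) (g : Fin N → ℝ) :
    ∑ i, ∑ j ∈ insert i (G.neighborFinset i), g j = ((k : ℝ) + 1) * ∑ j, g j := by
  calc ∑ i, ∑ j ∈ insert i (G.neighborFinset i), g j
      = ∑ i, ∑ j, if j ∈ insert i (G.neighborFinset i) then g j else 0 := by
        refine Finset.sum_congr rfl fun i _ => ?_
        rw [Finset.sum_ite_mem, Finset.univ_inter]
    _ = ∑ j, ∑ i, if j ∈ insert i (G.neighborFinset i) then g j else 0 := Finset.sum_comm
    _ = ∑ j : Fin N, ∑ i, if i ∈ insert j (G.neighborFinset j) then g j else 0 := by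
        refine Finset.sum_congr rfl fun j _ => Finset.sum_congr rfl fun i _ => ?_
        simp_rw [mem_closed_nbhd_comm]
    _ = ∑ j : Fin N, ((insert j (G.neighborFinset j)).card : ℝ) * g j := by
        refine Finset.sum_congr rfl fun j _ => ?_
        rw [Finset.sum_ite_mem, Finset.univ_inter, Finset.sum_const, nsmul_eq_mul]
    _ = ((k : ℝ) + 1) * ∑ j, g j := by
        rw [Finset.mul_sum]
        refine Finset.sum_congr rfl fun j _ => ?_
        rw [card_closed_nbhd G hreg j]
        push_cast; ring

lemma avg_apply (β : EuclideanSpace ℝ (Fin N)) (i : Fin N) :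
    (Matrix.toEuclideanLin (avgMatrix G k) β) i
      = (1 / ((k : ℝ) + 1)) * ∑ j ∈ insert i (G.neighborFinset i), β j := by
  have h0 : (Matrix.toEuclideanLin (avgMatrix G k) β) i = ∑ j, avgMatrix G k i j * β j := rfl
  have hm : ∀ j : Fin N, (j = i ∨ G.Adj i j) ↔ j ∈ insert i (G.neighborFinset i) := by
    intro j; simp [Finset.mem_insert, SimpleGraph.mem_neighborFinset]
  rw [h0, Finset.mul_sum]
  simp only [avgMatrix, Matrix.of_apply, ite_mul, zero_mul]
  simp_rw [hm]
  rw [Finset.sum_ite_mem, Finset.univ_inter]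

end LRBaux

set_option maxHeartbeats 1000000

open LRBaux Finset RealInnerProductSpace in
/-- For a connected `k`-regular graph with averaging matrix `A` and `σ₂ ≥ 0`
bounding `‖Ax‖₂ ≤ σ₂‖x‖₂` on the zero-sum subspace, the linear regularity constant of the
local consensus subspaces is at least `(1 - σ₂²)(k+1)/N`. -/
theorem linear_regularity_lower_bound {N k : ℕ} (G : SimpleGraph (Fin N))
    [DecidableRel G.Adj] (hconn : G.Connected) (hreg : G.IsRegularOfDegree k)
    (σ₂ : ℝ) (hσ₂ : 0 ≤ σ₂)
    (hσ : ∀ x : EuclideanSpace ℝ (Fin N), (∑ i, x i) = 0 →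
      ‖Matrix.toEuclideanLin (avgMatrix G k) x‖ ≤ σ₂ * ‖x‖)
    (β : EuclideanSpace ℝ (Fin N)) :
    (1 - σ₂ ^ 2) * (((k : ℝ) + 1) / N) *
        ‖β - (Submodule.orthogonalProjection (⨅ i, localConsensus G i) β : EuclideanSpace ℝ (Fin N))‖ ^ 2 ≤
      ⨆ i : Fin N,
        ‖β - (Submodule.orthogonalProjection (localConsensus G i) β : EuclideanSpace ℝ (Fin N))‖ ^ 2 := by
  classical
  obtain ⟨i₀⟩ := hconn.nonempty
  have hN : 0 < N := i₀.pos
  have hNR : (0 : ℝ) < N := by exact_mod_cast hN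
  have hk1 : ((k : ℝ) + 1) ≠ 0 := by positivity
  set S : Fin N → Finset (Fin N) := fun i => insert i (G.neighborFinset i) with hSdef
  set A := Matrix.toEuclideanLin (avgMatrix G k) with hA
  set a : Fin N → ℝ := fun i => (A β) i with hadef
  set e : Fin N → ℝ := fun i =>
    ‖β - (Submodule.orthogonalProjection (localConsensus G i) β : EuclideanSpace ℝ (Fin N))‖ ^ 2 with hedef
  have hsup_bdd : BddAbove (Set.range e) := (Set.finite_range e).bddAbove
  have hsup0 : (0 : ℝ) ≤ ⨆ i, e i := le_trans (sq_nonneg _) (le_ciSup hsup_bdd i₀)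
  have hsum_le : ∑ i, e i ≤ (N : ℝ) * ⨆ i, e i := by
    calc ∑ i, e i ≤ ∑ _i : Fin N, ⨆ j, e j :=
          Finset.sum_le_sum fun i _ => le_ciSup hsup_bdd i
      _ = (N : ℝ) * ⨆ j, e j := by
          rw [Finset.sum_const, Finset.card_univ, Fintype.card_fin, nsmul_eq_mul]
  -- the all-ones vector
  set c1 : EuclideanSpace ℝ (Fin N) := (WithLp.equiv 2 (Fin N → ℝ)).symm (fun _ => 1) with hc1
  have hc1app : ∀ i, c1 i = 1 := fun _ => rfl
  have hc1mem : ∀ i, c1 ∈ localConsensus G i := by intro i j _; rfl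
  set m : ℝ := (∑ i, β i) / N with hm
  set x : EuclideanSpace ℝ (Fin N) := β - m • c1 with hx
  have hxapp : ∀ i, x i = β i - m := by
    intro i; simp [hx, hc1app]
  have hxsum : ∑ i, x i = 0 := by
    simp only [hxapp, Finset.sum_sub_distrib, Finset.sum_const, Finset.card_univ,
      Fintype.card_fin, nsmul_eq_mul, hm]
    field_simp
    ring
  have hβeq : β = x + m • c1 := by rw [hx]; abel
  -- A fixes the all-ones vector
  have hAc1 : A c1 = c1 := by
    ext i
    rw [hA, avg_apply G c1 i]
    simp only [hc1app]
    rw [Finset.sum_const, card_closed_nbhd G hreg i, nsmul_eq_mul]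
    push_cast
    field_simp
  have hAβ : A β = A x + m • c1 := by
    rw [hβeq, map_add, map_smul, hAc1]
  -- inner products with the all-ones vector
  have hinner : ∀ y : EuclideanSpace ℝ (Fin N), (inner ℝ y c1 : ℝ) = ∑ i, y i := by
    intro y
    rw [PiLp.inner_apply]
    simp [hc1app]
  have hAxsum : ∑ i, (A x) i = 0 := by
    have : ∑ i, (A x) i = (1 / ((k : ℝ) + 1)) * ∑ i, ∑ j ∈ S i, x j := by
      rw [Finset.mul_sum]
      exact Finset.sum_congr rfl fun i _ => avg_apply G x i
    rw [this, double_count G hreg, hxsum]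
    ring
  have hc1norm : ‖c1‖ ^ 2 = (N : ℝ) := by
    rw [norm_sq_eq_sum]; simp [hc1app]
  have hnormβ : ‖β‖ ^ 2 = ‖x‖ ^ 2 + m ^ 2 * N := by
    rw [hβeq, norm_add_sq_real, real_inner_smul_right, hinner, hxsum, norm_smul]
    rw [mul_pow]
    rw [hc1norm]
    simp [sq_abs]
  have hnormAβ : ‖A β‖ ^ 2 = ‖A x‖ ^ 2 + m ^ 2 * N := by
    rw [hAβ, norm_add_sq_real, real_inner_smul_right, hinner, hAxsum, norm_smul]
    rw [mul_pow, hc1norm]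
    simp [sq_abs]
  -- spectral bound
  have hAxle : ‖A x‖ ^ 2 ≤ σ₂ ^ 2 * ‖x‖ ^ 2 := by
    have h1 := hσ x hxsum
    nlinarith [norm_nonneg (A x), norm_nonneg x]
  have hspec : (1 - σ₂ ^ 2) * ‖x‖ ^ 2 ≤ ‖β‖ ^ 2 - ‖A β‖ ^ 2 := by
    rw [hnormβ, hnormAβ]; nlinarith
  -- per-vertex lower bound on the local projection distances
  have hSsum : ∀ i, ∑ j ∈ S i, β j = ((S i).card : ℝ) * a i := by
    intro i
    show ∑ j ∈ S i, β j = ((S i).card : ℝ) * (A β) i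
    rw [hA, avg_apply G β i, card_closed_nbhd G hreg i]
    push_cast
    rw [← mul_assoc, mul_one_div, div_self hk1, one_mul]
  have hper : ∀ i, ∑ j ∈ S i, (β j - a i) ^ 2 ≤ e i := by
    intro i
    set v : EuclideanSpace ℝ (Fin N) :=
      (Submodule.orthogonalProjection (localConsensus G i) β : EuclideanSpace ℝ (Fin N)) with hv
    have hvmem : v ∈ localConsensus G i := SetLike.coe_mem _
    have hvconst : ∀ j ∈ S i, v j = v i := by
      intro j hj
      rcases Finset.mem_insert.1 hj with rfl | hj
      · rfl
      · exact (hvmem j (by simpa using hj)).symm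
    calc ∑ j ∈ S i, (β j - a i) ^ 2
        ≤ ∑ j ∈ S i, (β j - v i) ^ 2 := variance_min (S i) β (a i) (v i) (hSsum i)
      _ = ∑ j ∈ S i, (β j - v j) ^ 2 :=
          Finset.sum_congr rfl fun j hj => by rw [hvconst j hj]
      _ ≤ ∑ j : Fin N, (β j - v j) ^ 2 :=
          Finset.sum_le_sum_of_subset_of_nonneg (Finset.subset_univ _)
            (fun j _ _ => sq_nonneg _)
      _ = e i := by
          rw [hedef]
          simp only [← hv, norm_sq_eq_sum]
          exact Finset.sum_congr rfl fun j _ => by simp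
  -- summing up
  have hsum_ident : ∑ i, ∑ j ∈ S i, (β j - a i) ^ 2
      = ((k : ℝ) + 1) * (‖β‖ ^ 2 - ‖A β‖ ^ 2) := by
    have hexp : ∀ i, ∑ j ∈ S i, (β j - a i) ^ 2
        = (∑ j ∈ S i, (β j) ^ 2) - ((k : ℝ) + 1) * (a i) ^ 2 := by
      intro i
      have h1 : ∀ j ∈ S i, (β j - a i) ^ 2 = (β j) ^ 2 - 2 * a i * β j + a i ^ 2 := by
        intro j _; ring
      rw [Finset.sum_congr rfl h1, Finset.sum_add_distrib, Finset.sum_sub_distrib,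
        ← Finset.mul_sum, hSsum i, Finset.sum_const, card_closed_nbhd G hreg i, nsmul_eq_mul]
      push_cast
      ring
    rw [Finset.sum_congr rfl fun i _ => hexp i, Finset.sum_sub_distrib,
      double_count G hreg (fun j => (β j) ^ 2), ← Finset.mul_sum,
      norm_sq_eq_sum β, norm_sq_eq_sum (A β)]
    ring
  have hchain : ((k : ℝ) + 1) * ((1 - σ₂ ^ 2) * ‖x‖ ^ 2) ≤ (N : ℝ) * ⨆ i, e i := by
    calc ((k : ℝ) + 1) * ((1 - σ₂ ^ 2) * ‖x‖ ^ 2)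
        ≤ ((k : ℝ) + 1) * (‖β‖ ^ 2 - ‖A β‖ ^ 2) := by
          have : (0 : ℝ) ≤ (k : ℝ) + 1 := by positivity
          nlinarith
      _ = ∑ i, ∑ j ∈ S i, (β j - a i) ^ 2 := hsum_ident.symm
      _ ≤ ∑ i, e i := Finset.sum_le_sum fun i _ => hper i
      _ ≤ (N : ℝ) * ⨆ i, e i := hsum_le
  -- bound the distance to the intersection
  have hprojB : ‖β - (Submodule.orthogonalProjection (⨅ i, localConsensus G i) β :
      EuclideanSpace ℝ (Fin N))‖ ≤ ‖x‖ := by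
    have hmem : m • c1 ∈ ⨅ i, localConsensus G i :=
      (Submodule.mem_iInf _).2 fun i => Submodule.smul_mem _ m (hc1mem i)
    rw [← Submodule.starProjection_apply, Submodule.starProjection_minimal]
    have := ciInf_le (f := fun w : ↥(⨅ i, localConsensus G i) => ‖β - (w : EuclideanSpace ℝ (Fin N))‖)
      ⟨0, by rintro _ ⟨w, rfl⟩; exact norm_nonneg _⟩ (⟨m • c1, hmem⟩ : ↥(⨅ i, localConsensus G i))
    simpa [hx] using this
  by_cases hcase : 1 - σ₂ ^ 2 ≤ 0
  · refine le_trans ?_ hsup0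
    have h1 : (0 : ℝ) ≤ (((k : ℝ) + 1) / N) *
        ‖β - (Submodule.orthogonalProjection (⨅ i, localConsensus G i) β : EuclideanSpace ℝ (Fin N))‖ ^ 2 := by
      positivity
    nlinarith
  · push_neg at hcase
    set B := ‖β - (Submodule.orthogonalProjection (⨅ i, localConsensus G i) β :
      EuclideanSpace ℝ (Fin N))‖ with hB
    have hb2 : B ^ 2 ≤ ‖x‖ ^ 2 := by
      have h0 : (0 : ℝ) ≤ B := norm_nonneg _
      nlinarith [hprojB]
    have h2 : (N : ℝ) * ((1 - σ₂ ^ 2) * (((k : ℝ) + 1) / N) * B ^ 2)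
        ≤ (N : ℝ) * ⨆ i, e i := by
      have hdiv : ((k : ℝ) + 1) / N * N = (k : ℝ) + 1 := div_mul_cancel₀ _ (ne_of_gt hNR)
      calc (N : ℝ) * ((1 - σ₂ ^ 2) * (((k : ℝ) + 1) / N) * B ^ 2)
          = (1 - σ₂ ^ 2) * (((k : ℝ) + 1) / N * N) * B ^ 2 := by ring
        _ = ((k : ℝ) + 1) * ((1 - σ₂ ^ 2) * B ^ 2) := by rw [hdiv]; ring
        _ ≤ ((k : ℝ) + 1) * ((1 - σ₂ ^ 2) * ‖x‖ ^ 2) := by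
            have h := mul_le_mul_of_nonneg_left hb2 hcase.le
            nlinarith [h, (by positivity : (0 : ℝ) ≤ (k : ℝ) + 1)]
        _ ≤ (N : ℝ) * ⨆ i, e i := hchain
    exact le_of_mul_le_mul_left h2 hNR
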